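/- Let U ⊆ ℝⁿ be open and let 𝓛 : U × Matrix(n×k, ℝ) → ℝ be C², written 𝓛(x, p), satisfying for each fixed x the fundamental equations in the entries of p: ∂²𝓛/∂p_A^K∂p_B^L + ∂²𝓛/∂p_B^K∂p_A^L = 0 for all A, B ∈ {1,…,n} and K, L ∈ {1,…,k}. Then for every C² map f : U → ℝ^k, every K and every x ∈ U, Σ_{A=1}^{n} ∂/∂x^A [ (∂𝓛/∂p_A^K)(x, Df(x)) ] = Σ_{A=1}^{n} (∂²𝓛/∂x^A∂p_A^K)(x, Df(x)), where Df(x) is the n×k matrix ((∂f^K/∂x^A)(x)); in particular the left-hand side involves no second derivatives of f. -/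

import Mathlib

open MeasureTheory
open scoped BigOperators
open scoped Topology

noncomputable section

/-- Product of matrices given as functions (entry `(i,k)` is `∑ j, M i j * N j k`). -/
def mmul {a b c : ℕ} (M : Fin a → Fin b → ℝ) (N : Fin b → Fin c → ℝ) :
    Fin a → Fin c → ℝ :=
  fun i k => ∑ j, M i j * N j k

/-- Determinant of a square matrix given as a function. -/
def fdet {a : ℕ} (M : Fin a → Fin a → ℝ) : ℝ :=
  Matrix.det (Matrix.of M)

/-- Partial derivative of a function of a matrix with respect to the `(i,j)` entry. -/
def pdM {a b : ℕ} (L : (Fin a → Fin b → ℝ) → ℝ) (i : Fin a) (j : Fin b)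
    (m : Fin a → Fin b → ℝ) : ℝ :=
  deriv (fun t : ℝ => L (fun i' j' => m i' j' + (if i' = i ∧ j' = j then t else 0))) 0

/-- Partial derivative of a function of a vector with respect to the `i`-th coordinate. -/
def pdV {a : ℕ} (f : (Fin a → ℝ) → ℝ) (i : Fin a) (x : Fin a → ℝ) : ℝ :=
  deriv (fun t : ℝ => f (fun i' => x i' + (if i' = i then t else 0))) 0

/-- The fundamental equations for a function of an `a × b` matrix:
for all rows `i₁, i₂` and columns `j₁, j₂`,
`∂²L/∂m_{i₁}^{j₁}∂m_{i₂}^{j₂} + ∂²L/∂m_{i₂}^{j₁}∂m_{i₁}^{j₂} = 0`. -/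
def FundEqs {a b : ℕ} (L : (Fin a → Fin b → ℝ) → ℝ) : Prop :=
  ∀ (i₁ i₂ : Fin a) (j₁ j₂ : Fin b) (m : Fin a → Fin b → ℝ),
    pdM (fun m' => pdM L i₂ j₂ m') i₁ j₁ m + pdM (fun m' => pdM L i₁ j₂ m') i₂ j₁ m = 0

/-- The velocity matrix of a path `γ`: `(vel γ t) F A = ∂γ^A/∂t^F (t)`. -/
def vel {r n : ℕ} (γ : (Fin r → ℝ) → (Fin n → ℝ)) (t : Fin r → ℝ) :
    Fin r → Fin n → ℝ :=
  fun F A => pdV (fun s => γ s A) F t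

/-- The matrix of gradients of a copath `f`: `(grad f x) A K = ∂f^K/∂x^A (x)`. -/
def grad {n k : ℕ} (f : (Fin n → ℝ) → (Fin k → ℝ)) (x : Fin n → ℝ) :
    Fin n → Fin k → ℝ :=
  fun A K => pdV (fun y => f y K) A x

/-- An even `r`-form on an open set `U ⊆ ℝⁿ`: a smooth function `L(x, ẋ)` of a point
`x` and an `r × n` matrix `ẋ` which is covariant (`L(x, h·ẋ) = det h · L(x, ẋ)` for
invertible `h`) and satisfies the fundamental equations in the entries of `ẋ`. -/
def IsEvenForm {n r : ℕ} (U : Set (Fin n → ℝ))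
    (L : (Fin n → ℝ) → (Fin r → Fin n → ℝ) → ℝ) : Prop :=
  ContDiffOn ℝ (⊤ : ℕ∞)
      (fun q : (Fin n → ℝ) × (Fin r → Fin n → ℝ) => L q.1 q.2)
      (U ×ˢ (Set.univ : Set (Fin r → Fin n → ℝ))) ∧
  (∀ x ∈ U, ∀ (xdot : Fin r → Fin n → ℝ) (h : Fin r → Fin r → ℝ), fdet h ≠ 0 →
    L x (mmul h xdot) = fdet h * L x xdot) ∧
  (∀ x ∈ U, FundEqs (L x))

/-- The differential of a Lagrangian of paths `L(x, ẋ)`: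
`ΔL(x, (ẋ; ẏ)) = (−1)^r Σ_A ẏ^A (∂L/∂x^A − Σ_{F,B} ẋ_F^B ∂²L/∂x^B∂ẋ_F^A)`,
where `ẋ` consists of the first `r` rows and `ẏ` is the last row of the argument. -/
def Dform {n r : ℕ} (L : (Fin n → ℝ) → (Fin r → Fin n → ℝ) → ℝ) :
    (Fin n → ℝ) → (Fin (r + 1) → Fin n → ℝ) → ℝ :=
  fun x M => (-1 : ℝ) ^ r * ∑ A, M (Fin.last r) A *
    (pdV (fun x' => L x' (fun F => M (Fin.castSucc F))) A x
      - ∑ F, ∑ B, M (Fin.castSucc F) B *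
          pdV (fun x' => pdM (L x') F A (fun G => M (Fin.castSucc G))) B x)

/-- An even mixed form of codegree `k` and additional degree `r` on an open set
`U ⊆ ℝⁿ`: a smooth function `𝓛(x, p, w)` which is right-covariant, left-covariant,
admissible, and satisfies the fundamental equations in the entries of the stacked
`(n+r) × k` matrix (`p` over `w`). -/
def IsMixedForm {n k r : ℕ} (U : Set (Fin n → ℝ))
    (L : (Fin n → ℝ) → (Fin n → Fin k → ℝ) → (Fin r → Fin k → ℝ) → ℝ) : Prop :=
  ContDiffOn ℝ (⊤ : ℕ∞)
      (fun q : (Fin n → ℝ) × (Fin n → Fin k → ℝ) × (Fin r → Fin k → ℝ) =>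
        L q.1 q.2.1 q.2.2)
      (U ×ˢ (Set.univ : Set ((Fin n → Fin k → ℝ) × (Fin r → Fin k → ℝ)))) ∧
  (∀ x ∈ U, ∀ (p : Fin n → Fin k → ℝ) (w : Fin r → Fin k → ℝ) (g : Fin k → Fin k → ℝ),
    fdet g ≠ 0 → L x (mmul p g) (mmul w g) = fdet g * L x p w) ∧
  (∀ x ∈ U, ∀ (p : Fin n → Fin k → ℝ) (w : Fin r → Fin k → ℝ) (h : Fin r → Fin r → ℝ),
    fdet h ≠ 0 → L x p (mmul h w) = fdet h * L x p w) ∧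
  (∀ x ∈ U, ∀ (p : Fin n → Fin k → ℝ) (w : Fin r → Fin k → ℝ) (a : Fin n → Fin r → ℝ),
    L x (p + mmul a w) w = L x p w) ∧
  (∀ x ∈ U, FundEqs (fun m : Fin (n + r) → Fin k → ℝ =>
    L x (fun A => m (Fin.castAdd r A)) (fun F => m (Fin.natAdd n F))))

/-- The differential of a mixed Lagrangian `𝓛(x, p, w)`:
`Δ𝓛(x, p, ŵ) = (−1)^r Σ_{K,A} w'^K ∂²𝓛/∂x^A∂p_A^K (x, p, w)`, where `ŵ` has first
`r` rows `w` and last row `w'`. -/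
def Dmix {n k r : ℕ}
    (L : (Fin n → ℝ) → (Fin n → Fin k → ℝ) → (Fin r → Fin k → ℝ) → ℝ) :
    (Fin n → ℝ) → (Fin n → Fin k → ℝ) → (Fin (r + 1) → Fin k → ℝ) → ℝ :=
  fun x p what => (-1 : ℝ) ^ r * ∑ K, ∑ A, what (Fin.last r) K *
    pdV (fun x' => pdM (fun p' => L x' p' (fun F => what (Fin.castSucc F))) A K p) A x

/-- An even dual form of codegree `k` on an open set `U ⊆ ℝⁿ`: a smooth function
`𝓛(x, p)` of a point `x` and an `n × k` matrix `p` of momenta which is covariant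
(`𝓛(x, p·g) = det g · 𝓛(x, p)` for invertible `g`) and satisfies the fundamental
equations in the entries of `p`. -/
def IsDualForm {n k : ℕ} (U : Set (Fin n → ℝ))
    (L : (Fin n → ℝ) → (Fin n → Fin k → ℝ) → ℝ) : Prop :=
  ContDiffOn ℝ (⊤ : ℕ∞)
      (fun q : (Fin n → ℝ) × (Fin n → Fin k → ℝ) => L q.1 q.2)
      (U ×ˢ (Set.univ : Set (Fin n → Fin k → ℝ))) ∧
  (∀ x ∈ U, ∀ (p : Fin n → Fin k → ℝ) (g : Fin k → Fin k → ℝ), fdet g ≠ 0 →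
    L x (mmul p g) = fdet g * L x p) ∧
  (∀ x ∈ U, FundEqs (L x))

/-- The identity matrix as a function. -/
def idm (n : ℕ) : Fin n → Fin n → ℝ := fun i j => if i = j then 1 else 0

/-- Standard basis vector as a function. -/
def eVx {a : ℕ} (A : Fin a) : Fin a → ℝ := fun i => if i = A then 1 else 0

/-- Elementary matrix as a function. -/
def eMx {a b : ℕ} (i : Fin a) (j : Fin b) : Fin a → Fin b → ℝ :=
  fun i' j' => if i' = i ∧ j' = j then 1 else 0

lemma lineDeriv_helper {F : Type*} [NormedAddCommGroup F] [NormedSpace ℝ F]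
    {g : F → ℝ} {z : F} {g' : F →L[ℝ] ℝ} (hg : HasFDerivAt g g' z) (v : F) :
    deriv (fun t : ℝ => g (z + t • v)) 0 = g' v := by
  have h1 : HasDerivAt (fun t : ℝ => z + t • v) v 0 := by
    simpa using ((hasDerivAt_id (0 : ℝ)).smul_const v).const_add z
  have h2 : HasDerivAt (fun t : ℝ => g (z + t • v)) (g' v) 0 := by
    have h3 : HasFDerivAt g g' ((fun t : ℝ => z + t • v) 0) := by simpa using hg
    exact h3.comp_hasDerivAt 0 h1
  exact h2.deriv

lemma pdV_eq {a : ℕ} {g : (Fin a → ℝ) → ℝ} {x : Fin a → ℝ}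
    {g' : (Fin a → ℝ) →L[ℝ] ℝ} (hg : HasFDerivAt g g' x) (A : Fin a) :
    pdV g A x = g' (eVx A) := by
  have hfun : (fun t : ℝ => g fun i' => x i' + if i' = A then t else 0)
      = fun t : ℝ => g (x + t • eVx A) := by
    funext t
    congr 1
    funext i
    simp [eVx, mul_ite]
  rw [pdV, hfun]
  exact lineDeriv_helper hg _

lemma pdM_eq {a b : ℕ} {g : (Fin a → Fin b → ℝ) → ℝ} {m : Fin a → Fin b → ℝ}
    {g' : (Fin a → Fin b → ℝ) →L[ℝ] ℝ} (hg : HasFDerivAt g g' m) (i : Fin a) (j : Fin b) :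
    pdM g i j m = g' (eMx i j) := by
  have hfun : (fun t : ℝ => g fun i' j' => m i' j' + if i' = i ∧ j' = j then t else 0)
      = fun t : ℝ => g (m + t • eMx i j) := by
    funext t
    congr 1
    funext i' j'
    simp [eMx, mul_ite]
  rw [pdM, hfun]
  exact lineDeriv_helper hg _

set_option maxHeartbeats 2000000 in
/-- If a C² dual Lagrangian `𝓛(x, p)` satisfies the fundamental
equations in `p` for each `x ∈ U`, then for every C² copath `f : U → ℝ^k` the total
divergence `Σ_A ∂/∂x^A [(∂𝓛/∂p_A^K)(x, Df(x))]` involves no second derivatives of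
`f`: it equals `Σ_A (∂²𝓛/∂x^A∂p_A^K)(x, Df(x))`. -/
theorem statement_6 (n k : ℕ) (U : Set (Fin n → ℝ)) (hU : IsOpen U)
    (L : (Fin n → ℝ) → (Fin n → Fin k → ℝ) → ℝ)
    (hL : ContDiffOn ℝ 2
      (fun q : (Fin n → ℝ) × (Fin n → Fin k → ℝ) => L q.1 q.2)
      (U ×ˢ (Set.univ : Set (Fin n → Fin k → ℝ))))
    (hfund : ∀ x ∈ U, FundEqs (L x))
    (f : (Fin n → ℝ) → (Fin k → ℝ)) (hf : ContDiffOn ℝ 2 f U) :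
    ∀ (K : Fin k), ∀ x ∈ U,
      ∑ A, pdV (fun y => pdM (L y) A K (grad f y)) A x
        = ∑ A, pdV (fun y => pdM (L y) A K (grad f x)) A x := by
  intro K x hx
  classical
  have hSopen : IsOpen (U ×ˢ (Set.univ : Set (Fin n → Fin k → ℝ))) := hU.prod isOpen_univ
  set Φ : (Fin n → ℝ) × (Fin n → Fin k → ℝ) → ℝ := fun q => L q.1 q.2 with hΦdef
  have hmemS : ∀ {y : Fin n → ℝ}, y ∈ U → ∀ m : Fin n → Fin k → ℝ,
      ((y, m) : (Fin n → ℝ) × (Fin n → Fin k → ℝ)) ∈ U ×ˢ (Set.univ : Set (Fin n → Fin k → ℝ)) :=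
    fun hy m => ⟨hy, trivial⟩
  set Ψ : (Fin n → ℝ) × (Fin n → Fin k → ℝ) →
      ((Fin n → ℝ) × (Fin n → Fin k → ℝ)) →L[ℝ] ℝ := fun q => fderiv ℝ Φ q with hΨdef
  have hΨC1 : ContDiffOn ℝ 1 Ψ (U ×ˢ (Set.univ : Set (Fin n → Fin k → ℝ))) :=
    hL.fderiv_of_isOpen hSopen (by norm_num)
  have hΨq : ∀ {y : Fin n → ℝ}, y ∈ U → ∀ m : Fin n → Fin k → ℝ,
      HasFDerivAt Φ (Ψ (y, m)) (y, m) := by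
    intro y hy m
    exact ((hL.contDiffAt (hSopen.mem_nhds (hmemS hy m))).differentiableAt
      two_ne_zero).hasFDerivAt
  -- Lemma A : pdM as a directional fderiv of Φ
  have lemA : ∀ {y : Fin n → ℝ}, y ∈ U → ∀ (m : Fin n → Fin k → ℝ) (A : Fin n) (K' : Fin k),
      pdM (L y) A K' m = Ψ (y, m) ((0 : Fin n → ℝ), eMx A K') := by
    intro y hy m A K'
    have hι : HasFDerivAt
        (fun m' : Fin n → Fin k → ℝ => ((y, m') : (Fin n → ℝ) × (Fin n → Fin k → ℝ)))
        ((0 : (Fin n → Fin k → ℝ) →L[ℝ] (Fin n → ℝ)).prod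
          (ContinuousLinearMap.id ℝ (Fin n → Fin k → ℝ))) m :=
      HasFDerivAt.prodMk (hasFDerivAt_const y m) (hasFDerivAt_id m)
    have hg : HasFDerivAt (L y)
        ((Ψ (y, m)).comp ((0 : (Fin n → Fin k → ℝ) →L[ℝ] (Fin n → ℝ)).prod
          (ContinuousLinearMap.id ℝ (Fin n → Fin k → ℝ)))) m :=
      (hΨq hy m).comp m hι
    rw [pdM_eq hg A K']
    simp
  set p0 := grad f x with hp0
  have hzU : ((x, p0) : (Fin n → ℝ) × (Fin n → Fin k → ℝ)) ∈
      U ×ˢ (Set.univ : Set (Fin n → Fin k → ℝ)) := hmemS hx p0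
  set H := fderiv ℝ Ψ (x, p0) with hHdef
  have hΨx : HasFDerivAt Ψ H (x, p0) :=
    ((hΨC1.contDiffAt (hSopen.mem_nhds hzU)).differentiableAt one_ne_zero).hasFDerivAt
  -- Lemma C : second partials of L in p are entries of H
  have lemC : ∀ (i₁ i₂ : Fin n) (j₁ j₂ : Fin k),
      pdM (fun m' => pdM (L x) i₂ j₂ m') i₁ j₁ p0
        = H ((0 : Fin n → ℝ), eMx i₁ j₁) ((0 : Fin n → ℝ), eMx i₂ j₂) := by
    intro i₁ i₂ j₁ j₂
    have hι : HasFDerivAt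
        (fun m' : Fin n → Fin k → ℝ => ((x, m') : (Fin n → ℝ) × (Fin n → Fin k → ℝ)))
        ((0 : (Fin n → Fin k → ℝ) →L[ℝ] (Fin n → ℝ)).prod
          (ContinuousLinearMap.id ℝ (Fin n → Fin k → ℝ))) p0 :=
      HasFDerivAt.prodMk (hasFDerivAt_const x p0) (hasFDerivAt_id p0)
    have hΨcomp : HasFDerivAt (fun m' => Ψ (x, m'))
        (H.comp ((0 : (Fin n → Fin k → ℝ) →L[ℝ] (Fin n → ℝ)).prod
          (ContinuousLinearMap.id ℝ (Fin n → Fin k → ℝ)))) p0 := hΨx.comp p0 hι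
    have hev : HasFDerivAt
        (fun m' => Ψ (x, m') (((0 : Fin n → ℝ), eMx i₂ j₂) :
          (Fin n → ℝ) × (Fin n → Fin k → ℝ)))
        ((ContinuousLinearMap.apply ℝ ℝ
            (((0 : Fin n → ℝ), eMx i₂ j₂) : (Fin n → ℝ) × (Fin n → Fin k → ℝ))).comp
          (H.comp ((0 : (Fin n → Fin k → ℝ) →L[ℝ] (Fin n → ℝ)).prod
            (ContinuousLinearMap.id ℝ (Fin n → Fin k → ℝ))))) p0 :=
      (ContinuousLinearMap.apply ℝ ℝ (((0 : Fin n → ℝ), eMx i₂ j₂) :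
        (Fin n → ℝ) × (Fin n → Fin k → ℝ))).hasFDerivAt.comp p0 hΨcomp
    have hfuneq : (fun m' => pdM (L x) i₂ j₂ m')
        = fun m' => Ψ (x, m') (((0 : Fin n → ℝ), eMx i₂ j₂) :
            (Fin n → ℝ) × (Fin n → Fin k → ℝ)) := by
      funext m'
      exact lemA hx m' i₂ j₂
    rw [hfuneq, pdM_eq hev i₁ j₁]
    simp
  -- antisymmetry from the fundamental equations
  have hanti : ∀ (A B : Fin n) (L' : Fin k),
      H ((0 : Fin n → ℝ), eMx B L') ((0 : Fin n → ℝ), eMx A K)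
        = - H ((0 : Fin n → ℝ), eMx A L') ((0 : Fin n → ℝ), eMx B K) := by
    intro A B L'
    have h := hfund x hx B A L' K p0
    rw [lemC B A L' K, lemC A B L' K] at h
    linarith
  -- the derivative of grad f at x
  set Df : (Fin n → ℝ) → (Fin n → ℝ) →L[ℝ] (Fin k → ℝ) := fun y => fderiv ℝ f y with hDfdef
  have hDfC1 : ContDiffOn ℝ 1 Df U := hf.fderiv_of_isOpen hU (by norm_num)
  have hfdiff : ∀ᶠ y in 𝓝 x, HasFDerivAt f (Df y) y := by
    filter_upwards [hU.mem_nhds hx] with y hy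
    exact ((hf.contDiffAt (hU.mem_nhds hy)).differentiableAt two_ne_zero).hasFDerivAt
  set D2 := fderiv ℝ Df x with hD2def
  have hD2 : HasFDerivAt Df D2 x :=
    ((hDfC1.contDiffAt (hU.mem_nhds hx)).differentiableAt one_ne_zero).hasFDerivAt
  have hsym : ∀ v w, D2 v w = D2 w v := fun v w =>
    second_derivative_symmetric_of_eventually hfdiff hD2 v w
  set Θ : ((Fin n → ℝ) →L[ℝ] (Fin k → ℝ)) →L[ℝ] (Fin n → Fin k → ℝ) :=
    ContinuousLinearMap.pi (fun A => ContinuousLinearMap.pi (fun K' =>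
      (ContinuousLinearMap.proj K').comp
        (ContinuousLinearMap.apply ℝ (Fin k → ℝ) (eVx A)))) with hΘdef
  have hΘval : ∀ (T : (Fin n → ℝ) →L[ℝ] (Fin k → ℝ)) (A : Fin n) (K' : Fin k),
      Θ T A K' = T (eVx A) K' := fun T A K' => rfl
  have hgradeq : grad f =ᶠ[𝓝 x] fun y => Θ (Df y) := by
    filter_upwards [hU.mem_nhds hx] with y hy
    funext A K'
    have hfy : HasFDerivAt f (Df y) y :=
      ((hf.contDiffAt (hU.mem_nhds hy)).differentiableAt two_ne_zero).hasFDerivAt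
    have hcomp : HasFDerivAt (fun y' => f y' K')
        ((ContinuousLinearMap.proj K' : (Fin k → ℝ) →L[ℝ] ℝ).comp (Df y)) y :=
      (ContinuousLinearMap.proj K' : (Fin k → ℝ) →L[ℝ] ℝ).hasFDerivAt.comp y hfy
    show pdV (fun y' => f y' K') A y = Θ (Df y) A K'
    rw [pdV_eq hcomp A]
    rfl
  set g0 := Θ.comp D2 with hg0def
  have hgrad : HasFDerivAt (grad f) g0 x :=
    (Θ.hasFDerivAt.comp x hD2).congr_of_eventuallyEq hgradeq
  have hcsym : ∀ (A B : Fin n) (L' : Fin k), g0 (eVx A) B L' = g0 (eVx B) A L' := by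
    intro A B L'
    show Θ (D2 (eVx A)) B L' = Θ (D2 (eVx B)) A L'
    rw [hΘval, hΘval, hsym (eVx A) (eVx B)]
  -- main term computations
  have hmain : ∀ A : Fin n,
      pdV (fun y => pdM (L y) A K (grad f y)) A x
        = H (eVx A, g0 (eVx A)) ((0 : Fin n → ℝ), eMx A K) := by
    intro A
    have hF : HasFDerivAt
        (fun y => ((y, grad f y) : (Fin n → ℝ) × (Fin n → Fin k → ℝ)))
        ((ContinuousLinearMap.id ℝ (Fin n → ℝ)).prod g0) x :=
      HasFDerivAt.prodMk (hasFDerivAt_id x) hgrad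
    have hc : HasFDerivAt (fun y => Ψ (y, grad f y))
        (H.comp ((ContinuousLinearMap.id ℝ (Fin n → ℝ)).prod g0)) x := hΨx.comp x hF
    have happ : HasFDerivAt
        (fun y => Ψ (y, grad f y) (((0 : Fin n → ℝ), eMx A K) :
          (Fin n → ℝ) × (Fin n → Fin k → ℝ)))
        ((ContinuousLinearMap.apply ℝ ℝ
            (((0 : Fin n → ℝ), eMx A K) : (Fin n → ℝ) × (Fin n → Fin k → ℝ))).comp
          (H.comp ((ContinuousLinearMap.id ℝ (Fin n → ℝ)).prod g0))) x :=
      (ContinuousLinearMap.apply ℝ ℝ (((0 : Fin n → ℝ), eMx A K) :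
        (Fin n → ℝ) × (Fin n → Fin k → ℝ))).hasFDerivAt.comp x hc
    have hev : (fun y => pdM (L y) A K (grad f y))
        =ᶠ[𝓝 x] fun y => Ψ (y, grad f y) (((0 : Fin n → ℝ), eMx A K) :
          (Fin n → ℝ) × (Fin n → Fin k → ℝ)) := by
      filter_upwards [hU.mem_nhds hx] with y hy
      exact lemA hy (grad f y) A K
    have h' := happ.congr_of_eventuallyEq hev
    rw [pdV_eq h' A]
    simp
  have hmain2 : ∀ A : Fin n,
      pdV (fun y => pdM (L y) A K p0) A x
        = H (eVx A, (0 : Fin n → Fin k → ℝ)) ((0 : Fin n → ℝ), eMx A K) := by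
    intro A
    have hF : HasFDerivAt
        (fun y => ((y, p0) : (Fin n → ℝ) × (Fin n → Fin k → ℝ)))
        ((ContinuousLinearMap.id ℝ (Fin n → ℝ)).prod
          (0 : (Fin n → ℝ) →L[ℝ] (Fin n → Fin k → ℝ))) x :=
      HasFDerivAt.prodMk (hasFDerivAt_id x) (hasFDerivAt_const p0 x)
    have hc : HasFDerivAt (fun y => Ψ (y, p0))
        (H.comp ((ContinuousLinearMap.id ℝ (Fin n → ℝ)).prod
          (0 : (Fin n → ℝ) →L[ℝ] (Fin n → Fin k → ℝ)))) x := hΨx.comp x hF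
    have happ : HasFDerivAt
        (fun y => Ψ (y, p0) (((0 : Fin n → ℝ), eMx A K) :
          (Fin n → ℝ) × (Fin n → Fin k → ℝ)))
        ((ContinuousLinearMap.apply ℝ ℝ
            (((0 : Fin n → ℝ), eMx A K) : (Fin n → ℝ) × (Fin n → Fin k → ℝ))).comp
          (H.comp ((ContinuousLinearMap.id ℝ (Fin n → ℝ)).prod
            (0 : (Fin n → ℝ) →L[ℝ] (Fin n → Fin k → ℝ))))) x :=
      (ContinuousLinearMap.apply ℝ ℝ (((0 : Fin n → ℝ), eMx A K) :
        (Fin n → ℝ) × (Fin n → Fin k → ℝ))).hasFDerivAt.comp x hc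
    have hev : (fun y => pdM (L y) A K p0)
        =ᶠ[𝓝 x] fun y => Ψ (y, p0) (((0 : Fin n → ℝ), eMx A K) :
          (Fin n → ℝ) × (Fin n → Fin k → ℝ)) := by
      filter_upwards [hU.mem_nhds hx] with y hy
      exact lemA hy p0 A K
    have h' := happ.congr_of_eventuallyEq hev
    rw [pdV_eq h' A]
    simp
  -- decomposition of H in the matrix slot
  have hdecomp : ∀ (M : Fin n → Fin k → ℝ)
      (v : (Fin n → ℝ) × (Fin n → Fin k → ℝ)),
      H ((0 : Fin n → ℝ), M) v
        = ∑ B, ∑ L', M B L' * H ((0 : Fin n → ℝ), eMx B L') v := by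
    intro M v
    set φ : (Fin n → Fin k → ℝ) →L[ℝ] ℝ :=
      ((ContinuousLinearMap.apply ℝ ℝ v).comp H).comp
        ((0 : (Fin n → Fin k → ℝ) →L[ℝ] (Fin n → ℝ)).prod
          (ContinuousLinearMap.id ℝ (Fin n → Fin k → ℝ))) with hφdef
    have hφval : ∀ N : Fin n → Fin k → ℝ, φ N = H ((0 : Fin n → ℝ), N) v :=
      fun N => rfl
    have h1 : M = ∑ B, ∑ L', M B L' • eMx B L' := by
      funext i j
      simp [eMx, Finset.sum_apply, ite_and, mul_ite, Finset.sum_ite_eq]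
    calc H ((0 : Fin n → ℝ), M) v = φ M := (hφval M).symm
      _ = ∑ B, ∑ L', M B L' * φ (eMx B L') := by
          conv_lhs => rw [h1]
          simp [map_sum, _root_.map_smul, smul_eq_mul]
      _ = ∑ B, ∑ L', M B L' * H ((0 : Fin n → ℝ), eMx B L') v := by
          simp only [hφval]
  -- put it together
  calc ∑ A, pdV (fun y => pdM (L y) A K (grad f y)) A x
      = ∑ A, H (eVx A, g0 (eVx A)) ((0 : Fin n → ℝ), eMx A K) :=
        Finset.sum_congr rfl fun A _ => hmain A
    _ = ∑ A, (H ((0 : Fin n → ℝ), g0 (eVx A)) ((0 : Fin n → ℝ), eMx A K)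
          + H (eVx A, (0 : Fin n → Fin k → ℝ)) ((0 : Fin n → ℝ), eMx A K)) := by
        refine Finset.sum_congr rfl fun A _ => ?_
        have hsplit : ((eVx A, g0 (eVx A)) : (Fin n → ℝ) × (Fin n → Fin k → ℝ))
            = ((0 : Fin n → ℝ), g0 (eVx A)) + (eVx A, (0 : Fin n → Fin k → ℝ)) := by
          ext <;> simp
        rw [hsplit, map_add, ContinuousLinearMap.add_apply]
    _ = ∑ A, H (eVx A, (0 : Fin n → Fin k → ℝ)) ((0 : Fin n → ℝ), eMx A K) := by
        rw [Finset.sum_add_distrib]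
        have hzero : ∑ A, H ((0 : Fin n → ℝ), g0 (eVx A)) ((0 : Fin n → ℝ), eMx A K)
            = 0 := by
          have hexp : ∑ A, H ((0 : Fin n → ℝ), g0 (eVx A)) ((0 : Fin n → ℝ), eMx A K)
              = ∑ A, ∑ B, ∑ L', g0 (eVx A) B L'
                  * H ((0 : Fin n → ℝ), eMx B L') ((0 : Fin n → ℝ), eMx A K) :=
            Finset.sum_congr rfl fun A _ => hdecomp _ _
          set T := ∑ A, ∑ B, ∑ L', g0 (eVx A) B L'
              * H ((0 : Fin n → ℝ), eMx B L') ((0 : Fin n → ℝ), eMx A K) with hTdef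
          have hTneg : T = -T := by
            calc T = ∑ A, ∑ B, ∑ L', g0 (eVx A) B L'
                * (- H ((0 : Fin n → ℝ), eMx A L') ((0 : Fin n → ℝ), eMx B K)) := by
                  refine Finset.sum_congr rfl fun A _ => ?_
                  refine Finset.sum_congr rfl fun B _ => ?_
                  refine Finset.sum_congr rfl fun L' _ => ?_
                  rw [hanti A B L']
              _ = - ∑ A, ∑ B, ∑ L', g0 (eVx A) B L'
                  * H ((0 : Fin n → ℝ), eMx A L') ((0 : Fin n → ℝ), eMx B K) := by
                  simp [mul_neg, Finset.sum_neg_distrib]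
              _ = - ∑ B, ∑ A, ∑ L', g0 (eVx A) B L'
                  * H ((0 : Fin n → ℝ), eMx A L') ((0 : Fin n → ℝ), eMx B K) := by
                  rw [Finset.sum_comm]
              _ = -T := by
                  rw [hTdef]
                  congr 1
                  refine Finset.sum_congr rfl fun B _ => ?_
                  refine Finset.sum_congr rfl fun A _ => ?_
                  refine Finset.sum_congr rfl fun L' _ => ?_
                  rw [hcsym A B L']
          have : T = 0 := by linarith
          rw [hexp, this]
        rw [hzero, zero_add]
    _ = ∑ A, pdV (fun y => pdM (L y) A K p0) A x :=
        (Finset.sum_congr rfl fun A _ => hmain2 A).symm
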